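/- Let n ≥ 2 and let S be an n×n irreducible column stochastic matrix such that RSR⁻¹ is symmetric for some invertible diagonal matrix R; write S(d) = (1−d)I + dS. Let A₁ be a non-scalar diagonal matrix with positive diagonal entries, let c > 0, and set A₂ = cA₁⁻¹ (so A₂A₁ is a scalar matrix). If d ∈ [0, 1) is such that the spectral radius ρ(S(d)A₂S(d)A₁) = 1, then ρ(S(d̃)A₂S(d̃)A₁) > 1 for every d̃ ∈ (d, 1]. (Ecologically: along an out-of-phase period-2 orbit whose product fitness matrix is scalar, there is selection for every higher dispersal rate.) -/

import Mathlib

open Matrix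

open scoped Matrix.Norms.L2Operator ComplexOrder

/-- The spectral radius of a real square matrix: the maximum modulus of its complex
eigenvalues. -/
noncomputable def specRad {n : ℕ} (M : Matrix (Fin n) (Fin n) ℝ) : ℝ :=
  sSup ((fun μ => ‖μ‖) '' spectrum ℂ (M.map (fun x => (x : ℂ))))

/-- A real square matrix is column stochastic if its entries are nonnegative and each
column sums to one. -/
def ColStochastic {n : ℕ} (S : Matrix (Fin n) (Fin n) ℝ) : Prop :=
  (∀ i j, 0 ≤ S i j) ∧ ∀ j, ∑ i, S i j = 1

/-- A square matrix is irreducible if for every pair of indices `(j,k)` some positive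
power has positive `(j,k)` entry. -/
def MatIrreducible {n : ℕ} (S : Matrix (Fin n) (Fin n) ℝ) : Prop :=
  ∀ j k : Fin n, ∃ p : ℕ, 0 < p ∧ 0 < (S ^ p) j k

noncomputable instance matCStar {n : ℕ} : CStarAlgebra (Matrix (Fin n) (Fin n) ℂ) :=
  { Matrix.instL2OpNormedRing, Matrix.instL2OpNormedAlgebra (𝕜 := ℂ),
    Matrix.instCStarRing, (inferInstance : StarRing (Matrix (Fin n) (Fin n) ℂ)),
    (inferInstance : CompleteSpace (Matrix (Fin n) (Fin n) ℂ)),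
    (inferInstance : StarModule ℂ (Matrix (Fin n) (Fin n) ℂ)) with }

/-- Entrywise complexification. -/
noncomputable def mapC {n : ℕ} (M : Matrix (Fin n) (Fin n) ℝ) : Matrix (Fin n) (Fin n) ℂ :=
  M.map (fun x => (x : ℂ))

lemma mapC_mul {n : ℕ} (M N : Matrix (Fin n) (Fin n) ℝ) :
    mapC (M * N) = mapC M * mapC N := by
  ext i j
  simp [mapC, Matrix.mul_apply, Matrix.map_apply]

lemma mapC_one {n : ℕ} : mapC (1 : Matrix (Fin n) (Fin n) ℝ) = 1 := by
  ext i j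
  by_cases h : i = j <;> simp [mapC, Matrix.map_apply, Matrix.one_apply, h]

lemma mapC_smul {n : ℕ} (t : ℝ) (M : Matrix (Fin n) (Fin n) ℝ) :
    mapC (t • M) = (t : ℂ) • mapC M := by
  ext i j
  simp [mapC, Matrix.map_apply]

lemma mapC_add {n : ℕ} (M N : Matrix (Fin n) (Fin n) ℝ) :
    mapC (M + N) = mapC M + mapC N := by
  ext i j
  simp [mapC, Matrix.map_apply]

lemma mapC_transpose {n : ℕ} (M : Matrix (Fin n) (Fin n) ℝ) :
    mapC (Mᵀ) = (mapC M)ᴴ := by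
  ext i j
  simp [mapC, Matrix.map_apply, Matrix.conjTranspose_apply, Complex.conj_ofReal]

lemma mulVec_mapC {n : ℕ} (M : Matrix (Fin n) (Fin n) ℝ) (v : Fin n → ℝ) :
    (mapC M) *ᵥ (fun i => ((v i : ℝ) : ℂ)) = fun i => (((M *ᵥ v) i : ℝ) : ℂ) := by
  funext i
  simp [mapC, Matrix.mulVec, dotProduct, Matrix.map_apply]

lemma specRad_eq_norm {n : ℕ} [NeZero n] (N : Matrix (Fin n) (Fin n) ℝ) (hsymm : Nᵀ = N) :
    specRad N = ‖mapC N‖ := by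
  set Nc : Matrix (Fin n) (Fin n) ℂ := mapC N with hNc
  have hsa : IsSelfAdjoint Nc := by
    show Ncᴴ = Nc
    rw [hNc, ← mapC_transpose, hsymm]
  have hne : (spectrum ℂ Nc).Nonempty :=
    spectrum.nonempty_of_isAlgClosed_of_finiteDimensional ℂ Nc
  have hbdd : BddAbove ((fun μ => ‖μ‖) '' spectrum ℂ Nc) := by
    refine ⟨‖Nc‖, ?_⟩
    rintro y ⟨k, hk, rfl⟩
    simpa using spectrum.norm_le_norm_of_mem hk
  obtain ⟨k, hk, hkr⟩ := spectrum.exists_nnnorm_eq_spectralRadius_of_nonempty hne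
  rw [hsa.spectralRadius_eq_nnnorm] at hkr
  have hkeq : ‖k‖ = ‖Nc‖ := congrArg NNReal.toReal (ENNReal.coe_inj.mp hkr)
  refine le_antisymm ?_ ?_
  · apply Real.sSup_le
    · rintro y ⟨k', hk', rfl⟩
      exact spectrum.norm_le_norm_of_mem hk'
    · exact norm_nonneg _
  · exact le_csSup hbdd ⟨k, hk, by simpa using hkeq⟩

lemma specRad_conj {n : ℕ} (N P Q : Matrix (Fin n) (Fin n) ℝ)
    (hPQ : P * Q = 1) (hQP : Q * P = 1) : specRad (Q * N * P) = specRad N := by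
  have h1 : mapC P * mapC Q = 1 := by rw [← mapC_mul, hPQ, mapC_one]
  have h2 : mapC Q * mapC P = 1 := by rw [← mapC_mul, hQP, mapC_one]
  set u : (Matrix (Fin n) (Fin n) ℂ)ˣ := ⟨mapC P, mapC Q, h1, h2⟩ with hu
  have : (Q * N * P).map (fun x => (x : ℂ)) = (↑u⁻¹ : Matrix (Fin n) (Fin n) ℂ) * (N.map (fun x => (x : ℂ))) * (↑u : Matrix (Fin n) (Fin n) ℂ) := by
    show mapC (Q * N * P) = mapC Q * mapC N * mapC P
    rw [mapC_mul, mapC_mul]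
  unfold specRad
  rw [this, spectrum.units_conjugate']

lemma star_dot_self {n : ℕ} (y : Fin n → ℂ) :
    star y ⬝ᵥ y =
      ((‖((WithLp.equiv 2 _).symm y : EuclideanSpace ℂ (Fin n))‖ ^ 2 : ℝ) : ℂ) := by
  have hn : ‖((WithLp.equiv 2 _).symm y : EuclideanSpace ℂ (Fin n))‖ ^ 2 = ∑ i, ‖y i‖ ^ 2 := by
    rw [EuclideanSpace.norm_eq, Real.sq_sqrt (by positivity)]
    rfl
  rw [hn]
  push_cast
  simp only [dotProduct, Pi.star_apply]
  refine Finset.sum_congr rfl fun i _ => ?_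
  simpa using RCLike.conj_mul (y i)

lemma norm_ge_one_of_eigen {n : ℕ} (A : Matrix (Fin n) (Fin n) ℂ) (v : Fin n → ℂ)
    (hv : v ≠ 0) (h : A *ᵥ v = v) : 1 ≤ ‖A‖ := by
  set x : EuclideanSpace ℂ (Fin n) := (WithLp.equiv 2 _).symm v with hx
  have hxn : 0 < ‖x‖ := by
    rw [norm_pos_iff]
    simpa [hx] using hv
  have hb := Matrix.l2_opNorm_mulVec A x
  have hAx : (EuclideanSpace.equiv (Fin n) ℂ).symm (A *ᵥ x) = x := by
    apply (WithLp.equiv 2 _).injective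
    simpa [hx] using h
  rw [hAx] at hb
  nlinarith [hb, hxn]

lemma conjT_fixes {n : ℕ} (A : Matrix (Fin n) (Fin n) ℂ) (v : Fin n → ℂ)
    (hA : ‖A‖ ≤ 1) (h : A *ᵥ v = v) : Aᴴ *ᵥ v = v := by
  set K : Matrix (Fin n) (Fin n) ℂ := 1 - Aᴴ * A with hK
  have quad : ∀ x : Fin n → ℂ, star x ⬝ᵥ K *ᵥ x = star x ⬝ᵥ x - star (A *ᵥ x) ⬝ᵥ (A *ᵥ x) := by
    intro x
    rw [hK, Matrix.sub_mulVec, dotProduct_sub, Matrix.one_mulVec]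
    congr 1
    rw [← Matrix.mulVec_mulVec, dotProduct_mulVec, ← Matrix.star_mulVec]
  have hpsd : K.PosSemidef := by
    refine Matrix.posSemidef_iff_dotProduct_mulVec.mpr ⟨?_, ?_⟩
    · show Kᴴ = K
      simp [hK, Matrix.conjTranspose_sub, Matrix.conjTranspose_mul]
    · intro x
      rw [quad x, star_dot_self, star_dot_self, ← Complex.ofReal_sub, Complex.zero_le_real]
      have h1 := Matrix.l2_opNorm_mulVec A ((WithLp.equiv 2 _).symm x)
      have h2 : ((EuclideanSpace.equiv (Fin n) ℂ).symm <|
          A *ᵥ ((WithLp.equiv 2 _).symm x : EuclideanSpace ℂ (Fin n))) =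
          ((WithLp.equiv 2 _).symm (A *ᵥ x) : EuclideanSpace ℂ (Fin n)) := rfl
      rw [h2] at h1
      have h3 : ‖((WithLp.equiv 2 _).symm (A *ᵥ x) : EuclideanSpace ℂ (Fin n))‖ ≤
          ‖((WithLp.equiv 2 _).symm x : EuclideanSpace ℂ (Fin n))‖ :=
        h1.trans (mul_le_of_le_one_left (norm_nonneg _) hA)
      have h4 := pow_le_pow_left₀ (norm_nonneg _) h3 2
      linarith
  have hzero : star v ⬝ᵥ K *ᵥ v = 0 := by rw [quad v, h, sub_self]
  have hKv := (hpsd.dotProduct_mulVec_zero_iff v).mp hzero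
  rw [hK, Matrix.sub_mulVec, Matrix.one_mulVec, sub_eq_zero, ← Matrix.mulVec_mulVec, h] at hKv
  exact hKv.symm

lemma pow_entries_nonneg {n : ℕ} (C : Matrix (Fin n) (Fin n) ℝ) (hC : ∀ i j, 0 ≤ C i j) :
    ∀ p, ∀ i j, 0 ≤ (C ^ p) i j := by
  intro p
  induction p with
  | zero => intro i j; by_cases h : i = j <;> simp [pow_zero, Matrix.one_apply, h]
  | succ p ih =>
    intro i j
    rw [pow_succ, Matrix.mul_apply]
    exact Finset.sum_nonneg fun m _ => mul_nonneg (ih i m) (hC m j)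

lemma eig_nonneg_zero {n : ℕ} (C : Matrix (Fin n) (Fin n) ℝ) (hC : ∀ i j, 0 ≤ C i j)
    (y : Fin n → ℝ) (hy : ∀ i, 0 ≤ y i) (heig : C *ᵥ y = y) (k : Fin n) (hk : y k = 0)
    (hpow : ∀ j, ∃ p : ℕ, 0 < p ∧ 0 < (C ^ p) k j) : y = 0 := by
  have hpe : ∀ p : ℕ, (C ^ p) *ᵥ y = y := by
    intro p
    induction p with
    | zero => simp [pow_zero, Matrix.one_mulVec]
    | succ p ih => rw [pow_succ, ← Matrix.mulVec_mulVec, heig, ih]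
  funext j
  obtain ⟨p, hp, hpos⟩ := hpow j
  have hsum : ∑ m, (C ^ p) k m * y m = 0 := by
    have := congrFun (hpe p) k
    simpa [Matrix.mulVec, dotProduct, hk] using this
  have hterm : (C ^ p) k j * y j = 0 :=
    (Finset.sum_eq_zero_iff_of_nonneg (fun m _ =>
      mul_nonneg (pow_entries_nonneg C hC p k m) (hy m))).mp hsum j (Finset.mem_univ j)
  rcases mul_eq_zero.mp hterm with h | h
  · exact absurd h hpos.ne'
  · exact h

lemma pow_pos_transfer {n : ℕ} (S C : Matrix (Fin n) (Fin n) ℝ) (hS : ∀ i j, 0 ≤ S i j)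
    (hC : ∀ i j, 0 ≤ C i j) (t : ℝ) (ht : 0 < t) (hle : ∀ i j, t * S i j ≤ C i j) :
    ∀ p, ∀ i j, 0 < (S ^ p) i j → 0 < (C ^ p) i j := by
  intro p
  induction p with
  | zero => intro i j; simp [pow_zero]
  | succ p ih =>
    intro i j h
    rw [pow_succ', Matrix.mul_apply] at h ⊢
    obtain ⟨m, -, hm⟩ : ∃ m ∈ Finset.univ, 0 < S i m * (S ^ p) m j := by
      by_contra hcon
      push_neg at hcon
      have : ∑ m, S i m * (S ^ p) m j ≤ 0 := Finset.sum_nonpos fun m hm => by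
        linarith [hcon m hm]
      linarith
    have h1 : 0 < S i m := by
      rcases mul_pos_iff.mp hm with ⟨h1, _⟩ | ⟨h1, _⟩
      · exact h1
      · linarith [hS i m]
    have h2 : 0 < (S ^ p) m j := by
      rcases mul_pos_iff.mp hm with ⟨_, hb⟩ | ⟨_, hb⟩
      · exact hb
      · linarith [pow_entries_nonneg S hS p m j]
    have hCim : 0 < C i m := lt_of_lt_of_le (by positivity) (hle i m)
    refine Finset.sum_pos' (fun m' _ => mul_nonneg (hC i m') (pow_entries_nonneg C hC p m' j))
      ⟨m, Finset.mem_univ m, mul_pos hCim (ih m j h2)⟩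

lemma conj_id {n : ℕ} (T : Matrix (Fin n) (Fin n) ℝ) (a q pv : Fin n → ℝ)
    (ha : ∀ i, 0 < a i) (hq : ∀ i, 0 < q i) (hp : ∀ i, 0 < pv i)
    (hp2 : ∀ i, pv i ^ 2 = a i * q i)
    (hrev : ∀ i j, q i * T i j = q j * T j i) (c : ℝ) :
    diagonal pv * (T * (c • diagonal (fun i => (a i)⁻¹)) * (T * diagonal a)) *
      diagonal (fun i => (pv i)⁻¹) =
    c • ((diagonal pv * T * diagonal (fun i => (pv i)⁻¹)) *
         (diagonal pv * T * diagonal (fun i => (pv i)⁻¹))ᵀ) := by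
  have hH : ∀ i j, (diagonal pv * T * diagonal (fun i => (pv i)⁻¹)) i j
      = pv i * T i j * (pv j)⁻¹ := by
    intro i j
    rw [Matrix.mul_diagonal, Matrix.diagonal_mul]
  have hX : ∀ i j, (T * (c • diagonal (fun i => (a i)⁻¹)) * (T * diagonal a)) i j
      = ∑ m, (T i m * (c * (a m)⁻¹)) * (T m j * a j) := by
    intro i j
    rw [Matrix.mul_apply]
    refine Finset.sum_congr rfl fun m _ => ?_
    rw [Matrix.mul_smul, Matrix.smul_apply, Matrix.mul_diagonal, Matrix.mul_diagonal]
    simp only [smul_eq_mul]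
    ring
  ext i j
  rw [Matrix.mul_diagonal, Matrix.diagonal_mul, hX, Matrix.smul_apply, Matrix.mul_apply,
    Finset.mul_sum, Finset.sum_mul, smul_eq_mul, Finset.mul_sum]
  refine Finset.sum_congr rfl fun m _ => ?_
  rw [Matrix.transpose_apply, hH, hH]
  have h1 : T m j = q j * T j m * (q m)⁻¹ := by
    rw [eq_mul_inv_iff_mul_eq₀ (hq m).ne']
    linarith [hrev m j]
  have h2 : (a m)⁻¹ = q m * (pv m ^ 2)⁻¹ := by
    rw [hp2 m, mul_inv]
    field_simp [(ha m).ne', (hq m).ne']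
  have h3 : a j = pv j ^ 2 * (q j)⁻¹ := by
    rw [hp2 j, mul_assoc, mul_inv_cancel₀ (hq j).ne', mul_one]
  rw [h1, h2, h3]
  field_simp [(hq m).ne', (hq j).ne', (hp j).ne', (hp m).ne']

set_option maxHeartbeats 2000000

theorem selection_for_higher_dispersal {n : ℕ} (hn : 2 ≤ n)
    (S : Matrix (Fin n) (Fin n) ℝ) (hS : ColStochastic S) (hirr : MatIrreducible S)
    (r : Fin n → ℝ) (hr : ∀ i, r i ≠ 0)
    (hsym : (Matrix.diagonal r * S * (Matrix.diagonal r)⁻¹).IsSymm)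
    (a : Fin n → ℝ) (ha : ∀ j, 0 < a j) (hns : ∃ j k, a j ≠ a k)
    (c : ℝ) (hc : 0 < c)
    (A₂ : Matrix (Fin n) (Fin n) ℝ) (hA₂ : A₂ = c • (Matrix.diagonal a)⁻¹)
    (d : ℝ) (hd0 : 0 ≤ d) (hd1 : d < 1)
    (hres : specRad (((1 - d) • 1 + d • S) * A₂ *
      (((1 - d) • 1 + d • S) * Matrix.diagonal a)) = 1) :
    ∀ dt : ℝ, d < dt → dt ≤ 1 →
      1 < specRad (((1 - dt) • 1 + dt • S) * A₂ *
        (((1 - dt) • 1 + dt • S) * Matrix.diagonal a)) := by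
  classical
  haveI : NeZero n := ⟨by omega⟩
  obtain ⟨hSnn, hScol⟩ := hS
  set q : Fin n → ℝ := fun i => r i ^ 2 with hqdef
  have hq : ∀ i, 0 < q i := fun i => by have := hr i; positivity
  set pv : Fin n → ℝ := fun i => Real.sqrt (a i * q i) with hpvdef
  have hpv : ∀ i, 0 < pv i := fun i => Real.sqrt_pos.mpr (mul_pos (ha i) (hq i))
  have hp2 : ∀ i, pv i ^ 2 = a i * q i := fun i => Real.sq_sqrt (mul_pos (ha i) (hq i)).le
  -- reversibility
  have hrev : ∀ i j, q i * S i j = q j * S j i := by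
    intro i j
    have hd : (diagonal r)⁻¹ = diagonal (fun i => (r i)⁻¹) := by
      refine Matrix.inv_eq_right_inv ?_
      rw [Matrix.diagonal_mul_diagonal, ← Matrix.diagonal_one]
      exact congrArg Matrix.diagonal (funext fun i => mul_inv_cancel₀ (hr i))
    have he : ∀ i j, (diagonal r * S * (diagonal r)⁻¹) i j = r i * S i j * (r j)⁻¹ := by
      intro i j
      rw [hd, Matrix.mul_diagonal, Matrix.diagonal_mul]
    have h := congrFun (congrFun hsym j) i
    rw [Matrix.transpose_apply] at h
    rw [he, he] at h
    have hri := hr i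
    have hrj := hr j
    field_simp at h
    simp only [hqdef]
    nlinarith [h]
  have hPP : diagonal pv * diagonal (fun i => (pv i)⁻¹) = (1 : Matrix (Fin n) (Fin n) ℝ) := by
    rw [Matrix.diagonal_mul_diagonal, ← Matrix.diagonal_one]
    exact congrArg Matrix.diagonal (funext fun i => mul_inv_cancel₀ (hpv i).ne')
  have hPinvP : diagonal (fun i => (pv i)⁻¹) * diagonal pv = (1 : Matrix (Fin n) (Fin n) ℝ) := by
    rw [Matrix.diagonal_mul_diagonal, ← Matrix.diagonal_one]
    exact congrArg Matrix.diagonal (funext fun i => inv_mul_cancel₀ (hpv i).ne')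
  have hSdrev : ∀ (δ : ℝ) i j, q i * ((1 - δ) • (1 : Matrix (Fin n) (Fin n) ℝ) + δ • S) i j
      = q j * ((1 - δ) • (1 : Matrix (Fin n) (Fin n) ℝ) + δ • S) j i := by
    intro δ i j
    simp only [Matrix.add_apply, Matrix.smul_apply, smul_eq_mul]
    by_cases h : i = j
    · subst h; ring
    · rw [Matrix.one_apply_ne h, Matrix.one_apply_ne (Ne.symm h)]
      linear_combination δ * hrev i j
  have hSdnn : ∀ (δ : ℝ), 0 ≤ δ → δ ≤ 1 →
      ∀ i j, 0 ≤ ((1 - δ) • (1 : Matrix (Fin n) (Fin n) ℝ) + δ • S) i j := by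
    intro δ h0 h1 i j
    simp only [Matrix.add_apply, Matrix.smul_apply, smul_eq_mul]
    have h2 : (0:ℝ) ≤ (1 : Matrix (Fin n) (Fin n) ℝ) i j := by
      by_cases h : i = j <;> simp [Matrix.one_apply, h]
    have h3 : (0:ℝ) ≤ 1 - δ := by linarith
    exact add_nonneg (mul_nonneg h3 h2) (mul_nonneg h0 (hSnn i j))
  have hSdcol : ∀ (δ : ℝ) j, ∑ i, ((1 - δ) • (1 : Matrix (Fin n) (Fin n) ℝ) + δ • S) i j = 1 := by
    intro δ j
    simp only [Matrix.add_apply, Matrix.smul_apply, smul_eq_mul]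
    rw [Finset.sum_add_distrib, ← Finset.mul_sum, ← Finset.mul_sum, hScol j]
    have : ∑ i, (1 : Matrix (Fin n) (Fin n) ℝ) i j = 1 := by
      simp [Matrix.one_apply]
    rw [this]
    ring
  set xv : Fin n → ℝ := fun i => (q i)⁻¹ with hxvdef
  have hSx : S *ᵥ xv = xv := by
    funext i
    simp only [Matrix.mulVec, dotProduct]
    have he : ∀ j, S i j * xv j = S j i * xv i := by
      intro j
      simp only [hxvdef]
      field_simp [(hq i).ne', (hq j).ne']
      linear_combination hrev i j
    rw [Finset.sum_congr rfl (fun j _ => he j), ← Finset.sum_mul, hScol i, one_mul]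
  have hSdx : ∀ (δ : ℝ), ((1 - δ) • (1 : Matrix (Fin n) (Fin n) ℝ) + δ • S) *ᵥ xv = xv := by
    intro δ
    rw [Matrix.add_mulVec, Matrix.smul_mulVec, Matrix.smul_mulVec,
      Matrix.one_mulVec, hSx]
    funext i
    simp only [Pi.add_apply, Pi.smul_apply, smul_eq_mul]
    ring
  set vv : Fin n → ℝ := fun i => pv i * xv i with hvvdef
  have hPx : diagonal pv *ᵥ xv = vv := by
    funext i
    rw [Matrix.mulVec_diagonal]
  have hHv : ∀ (δ : ℝ),
      (diagonal pv * ((1 - δ) • (1 : Matrix (Fin n) (Fin n) ℝ) + δ • S) *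
        diagonal (fun i => (pv i)⁻¹)) *ᵥ vv = vv := by
    intro δ
    rw [← hPx, Matrix.mulVec_mulVec, mul_assoc _ _ (diagonal pv), hPinvP, mul_one,
      ← Matrix.mulVec_mulVec, hSdx]
  -- complexification
  have hvc0 : (fun i => ((vv i : ℝ) : ℂ)) ≠ 0 := by
    intro hcon
    have := congrFun hcon ⟨0, by omega⟩
    simp only [Pi.zero_apply, Complex.ofReal_eq_zero] at this
    have : 0 < vv ⟨0, by omega⟩ := mul_pos (hpv _) (inv_pos.mpr (hq _))
    simp_all
  have hHcv : ∀ (δ : ℝ),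
      mapC (diagonal pv * ((1 - δ) • (1 : Matrix (Fin n) (Fin n) ℝ) + δ • S) *
        diagonal (fun i => (pv i)⁻¹)) *ᵥ (fun i => ((vv i : ℝ) : ℂ)) =
        (fun i => ((vv i : ℝ) : ℂ)) := by
    intro δ
    have h := mulVec_mapC (diagonal pv * ((1 - δ) • (1 : Matrix (Fin n) (Fin n) ℝ) + δ • S) *
        diagonal (fun i => (pv i)⁻¹)) vv
    rw [hHv δ] at h
    exact h
  have hf1 : ∀ (δ : ℝ), 1 ≤ ‖mapC (diagonal pv *
      ((1 - δ) • (1 : Matrix (Fin n) (Fin n) ℝ) + δ • S) * diagonal (fun i => (pv i)⁻¹))‖ :=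
    fun δ => norm_ge_one_of_eigen _ _ hvc0 (hHcv δ)
  have hA2 : A₂ = c • diagonal (fun i => (a i)⁻¹) := by
    rw [hA₂]
    congr 1
    refine Matrix.inv_eq_right_inv ?_
    rw [Matrix.diagonal_mul_diagonal, ← Matrix.diagonal_one]
    exact congrArg Matrix.diagonal (funext fun i => mul_inv_cancel₀ (ha i).ne')
  have sandwich : ∀ X : Matrix (Fin n) (Fin n) ℝ,
      diagonal (fun i => (pv i)⁻¹) * (diagonal pv * X * diagonal (fun i => (pv i)⁻¹)) *
        diagonal pv = X := by
    intro X
    have h : diagonal (fun i => (pv i)⁻¹) * (diagonal pv * X * diagonal (fun i => (pv i)⁻¹)) *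
        diagonal pv = (diagonal (fun i => (pv i)⁻¹) * diagonal pv) * X *
        ((fun Y => Y) (diagonal (fun i => (pv i)⁻¹) * diagonal pv)) := by
      noncomm_ring
    rw [h, hPinvP, one_mul, mul_one]
  have hkey : ∀ (δ : ℝ), specRad (((1 - δ) • 1 + δ • S) * A₂ *
      (((1 - δ) • 1 + δ • S) * Matrix.diagonal a)) =
      c * ‖mapC (diagonal pv * ((1 - δ) • (1 : Matrix (Fin n) (Fin n) ℝ) + δ • S) *
        diagonal (fun i => (pv i)⁻¹))‖ ^ 2 := by
    intro δ
    have hid := conj_id ((1 - δ) • (1 : Matrix (Fin n) (Fin n) ℝ) + δ • S) a q pv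
      ha hq hpv hp2 (hSdrev δ) c
    have hM : ((1 - δ) • (1 : Matrix (Fin n) (Fin n) ℝ) + δ • S) * A₂ *
        (((1 - δ) • 1 + δ • S) * Matrix.diagonal a) =
        diagonal (fun i => (pv i)⁻¹) *
          (c • ((diagonal pv * ((1 - δ) • 1 + δ • S) * diagonal (fun i => (pv i)⁻¹)) *
            (diagonal pv * ((1 - δ) • 1 + δ • S) * diagonal (fun i => (pv i)⁻¹))ᵀ)) *
          diagonal pv := by
      rw [hA2, ← hid, sandwich]
    rw [hM, specRad_conj _ (diagonal pv) (diagonal (fun i => (pv i)⁻¹)) hPP hPinvP]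
    rw [specRad_eq_norm _ (by
      rw [Matrix.transpose_smul, Matrix.transpose_mul, Matrix.transpose_transpose])]
    rw [mapC_smul, mapC_mul, mapC_transpose, norm_smul, ← Matrix.star_eq_conjTranspose,
      CStarRing.norm_self_mul_star]
    simp only [Complex.norm_real, Real.norm_eq_abs, abs_of_pos hc]
    ring
  -- resident condition
  have hres' : c * ‖mapC (diagonal pv * ((1 - d) • (1 : Matrix (Fin n) (Fin n) ℝ) + d • S) *
      diagonal (fun i => (pv i)⁻¹))‖ ^ 2 = 1 := by
    rw [← hkey d]
    exact hres
  intro dt hdt hdt1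
  have hdtpos : 0 < dt := lt_of_le_of_lt hd0 hdt
  rw [hkey dt]
  -- strictness at dt
  have hstrict : 1 < ‖mapC (diagonal pv * ((1 - dt) • (1 : Matrix (Fin n) (Fin n) ℝ) + dt • S) *
      diagonal (fun i => (pv i)⁻¹))‖ := by
    rcases lt_or_ge 1 ‖mapC (diagonal pv * ((1 - dt) • (1 : Matrix (Fin n) (Fin n) ℝ) + dt • S) *
      diagonal (fun i => (pv i)⁻¹))‖ with h | h
    · exact h
    exfalso
    have hconj := conjT_fixes _ _ h (hHcv dt)
    have hTv : ((diagonal pv * ((1 - dt) • (1 : Matrix (Fin n) (Fin n) ℝ) + dt • S) *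
        diagonal (fun i => (pv i)⁻¹))ᵀ) *ᵥ vv = vv := by
      have h2 := mulVec_mapC ((diagonal pv * ((1 - dt) • (1 : Matrix (Fin n) (Fin n) ℝ) + dt • S) *
        diagonal (fun i => (pv i)⁻¹))ᵀ) vv
      rw [mapC_transpose, hconj] at h2
      funext i
      have := congrFun h2 i
      exact_mod_cast this.symm
    rw [Matrix.transpose_mul, Matrix.transpose_mul, Matrix.diagonal_transpose,
      Matrix.diagonal_transpose] at hTv
    -- hTv : (diagonal pv⁻¹ * (((1-dt)•1+dt•S)ᵀ * diagonal pv)) *ᵥ vv = vv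
    have hPv : diagonal pv *ᵥ vv = a := by
      funext i
      rw [Matrix.mulVec_diagonal]
      simp only [hvvdef, hxvdef]
      field_simp [(hq i).ne']
      linear_combination hp2 i
    have hTa : (((1 - dt) • (1 : Matrix (Fin n) (Fin n) ℝ) + dt • S))ᵀ *ᵥ a = a := by
      have h3 := congrArg (fun w => diagonal pv *ᵥ w) hTv
      rw [Matrix.mulVec_mulVec, ← mul_assoc, hPP, one_mul, ← Matrix.mulVec_mulVec, hPv] at h3
      exact h3
    have hT1 : (((1 - dt) • (1 : Matrix (Fin n) (Fin n) ℝ) + dt • S))ᵀ *ᵥ (fun _ => (1:ℝ)) =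
        (fun _ => (1:ℝ)) := by
      funext i
      simp only [Matrix.mulVec, dotProduct, Matrix.transpose_apply, mul_one]
      exact hSdcol dt i
    obtain ⟨i₀, -, hi₀⟩ := Finset.exists_min_image Finset.univ a ⟨⟨0, by omega⟩, Finset.mem_univ _⟩
    have hyeig : (((1 - dt) • (1 : Matrix (Fin n) (Fin n) ℝ) + dt • S))ᵀ *ᵥ
        (fun i => a i - a i₀) = (fun i => a i - a i₀) := by
      have hy : (fun i => a i - a i₀) = a - (a i₀) • (fun _ => (1:ℝ)) := by
        funext i
        simp
      rw [hy, Matrix.mulVec_sub, Matrix.mulVec_smul, hTa, hT1]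
    have hle : ∀ i j, dt * S i j ≤ ((1 - dt) • (1 : Matrix (Fin n) (Fin n) ℝ) + dt • S) i j := by
      intro i j
      simp only [Matrix.add_apply, Matrix.smul_apply, smul_eq_mul]
      have h2 : (0:ℝ) ≤ (1 : Matrix (Fin n) (Fin n) ℝ) i j := by
        by_cases hh : i = j <;> simp [Matrix.one_apply, hh]
      nlinarith [hSnn i j]
    have hy0 : (fun i => a i - a i₀) = 0 := by
      refine eig_nonneg_zero _ ?_ _ ?_ hyeig i₀ (by simp) ?_
      · intro i j
        rw [Matrix.transpose_apply]
        exact hSdnn dt (by linarith) hdt1 j i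
      · intro i
        have := hi₀ i (Finset.mem_univ i)
        linarith
      · intro j
        obtain ⟨p, hp, hps⟩ := hirr j i₀
        refine ⟨p, hp, ?_⟩
        rw [← Matrix.transpose_pow, Matrix.transpose_apply]
        exact pow_pos_transfer S _ hSnn (hSdnn dt (by linarith) hdt1) dt hdtpos hle p j i₀ hps
    obtain ⟨j₁, k₁, hjk⟩ := hns
    have e1 : a j₁ = a i₀ := by
      have := congrFun hy0 j₁
      simp only [Pi.zero_apply, sub_eq_zero] at this
      exact this
    have e2 : a k₁ = a i₀ := by
      have := congrFun hy0 k₁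
      simp only [Pi.zero_apply, sub_eq_zero] at this
      exact this
    exact hjk (e1.trans e2.symm)
  -- conclusion
  have hfd1 := hf1 d
  rcases eq_or_lt_of_le hfd1 with heq | hlt
  · have hc1 : c = 1 := by
      rw [← heq] at hres'
      nlinarith [hres']
    rw [hc1, one_mul]
    nlinarith [hstrict]
  · have hd0' : 0 < d := by
      rcases eq_or_lt_of_le hd0 with h0 | h0
      · exfalso
        have hone : (1 - d) • (1 : Matrix (Fin n) (Fin n) ℝ) + d • S = 1 := by
          rw [← h0]
          simp
        rw [hone, mul_one, hPP, mapC_one, norm_one] at hlt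
        exact lt_irrefl _ hlt
      · exact h0
    set lam : ℝ := d / dt with hlamdef
    have hlam0 : 0 < lam := div_pos hd0' hdtpos
    have hlam1 : lam < 1 := (div_lt_one hdtpos).mpr hdt
    have hlamd : lam * dt = d := div_mul_cancel₀ d hdtpos.ne'
    have hHm : ∀ δ : ℝ, diagonal pv * ((1 - δ) • (1 : Matrix (Fin n) (Fin n) ℝ) + δ • S) *
        diagonal (fun i => (pv i)⁻¹) = (1 - δ) • (1 : Matrix (Fin n) (Fin n) ℝ) +
        δ • (diagonal pv * S * diagonal (fun i => (pv i)⁻¹)) := by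
      intro δ
      rw [Matrix.mul_add, Matrix.add_mul, Matrix.mul_smul, Matrix.smul_mul, Matrix.mul_smul,
        Matrix.smul_mul, mul_one, hPP]
    have hHcform : ∀ δ : ℝ, mapC (diagonal pv *
        ((1 - δ) • (1 : Matrix (Fin n) (Fin n) ℝ) + δ • S) * diagonal (fun i => (pv i)⁻¹)) =
        ((1 - δ : ℝ) : ℂ) • (1 : Matrix (Fin n) (Fin n) ℂ) +
        ((δ : ℝ) : ℂ) • mapC (diagonal pv * S * diagonal (fun i => (pv i)⁻¹)) := by
      intro δ
      rw [hHm δ, mapC_add, mapC_smul, mapC_smul, mapC_one]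
    have hcomb : mapC (diagonal pv * ((1 - d) • (1 : Matrix (Fin n) (Fin n) ℝ) + d • S) *
        diagonal (fun i => (pv i)⁻¹)) =
        ((1 - lam : ℝ) : ℂ) • (1 : Matrix (Fin n) (Fin n) ℂ) + ((lam : ℝ) : ℂ) •
          mapC (diagonal pv * ((1 - dt) • (1 : Matrix (Fin n) (Fin n) ℝ) + dt • S) *
            diagonal (fun i => (pv i)⁻¹)) := by
      rw [hHcform d, hHcform dt, smul_add, smul_smul, smul_smul, ← add_assoc, ← add_smul]
      congr 1
      · congr 1
        have hr1 : (1 - d : ℝ) = (1 - lam) + lam * (1 - dt) := by nlinarith [hlamd]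
        push_cast [hr1]
        ring
      · congr 1
        push_cast [← hlamd]
        ring
    have hconv : ‖mapC (diagonal pv * ((1 - d) • (1 : Matrix (Fin n) (Fin n) ℝ) + d • S) *
        diagonal (fun i => (pv i)⁻¹))‖ ≤ (1 - lam) + lam *
        ‖mapC (diagonal pv * ((1 - dt) • (1 : Matrix (Fin n) (Fin n) ℝ) + dt • S) *
          diagonal (fun i => (pv i)⁻¹))‖ := by
      rw [hcomb]
      refine (norm_add_le _ _).trans ?_
      rw [norm_smul, norm_smul, norm_one, mul_one]
      simp only [Complex.norm_real, Real.norm_eq_abs]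
      rw [abs_of_pos hlam0, abs_of_nonneg (by linarith : (0:ℝ) ≤ 1 - lam)]
    have h5 : ‖mapC (diagonal pv * ((1 - d) • (1 : Matrix (Fin n) (Fin n) ℝ) + d • S) *
        diagonal (fun i => (pv i)⁻¹))‖ < ‖mapC (diagonal pv *
        ((1 - dt) • (1 : Matrix (Fin n) (Fin n) ℝ) + dt • S) *
        diagonal (fun i => (pv i)⁻¹))‖ := by nlinarith [hconv, hlt, hlam1, hlam0]
    nlinarith [h5, hlt, hc, hres']
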